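/- Assume hypotheses (EC) and (UC). Then the two parameter sets A = {(M,r) : M > 0 and r ∈ [r(M,0),r_T) ∩ (0,r_T)} and B = {(M,r) : r ∈ (0,r_T) and M ≥ M(0,r)} are equal. -/

import Mathlib

open MeasureTheory Set Filter Topology

noncomputable section

variable {H : Type*} [NormedAddCommGroup H] [InnerProductSpace ℂ H] [CompleteSpace H]
  [SecondCountableTopology H]

/-- `U` is a strongly continuous one-parameter group of unitary operators on `H`,
abstracting the Schrödinger group `e^{-iΔt}`. -/
def IsUnitaryGroup (U : ℝ → H →L[ℂ] H) : Prop :=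
  U 0 = ContinuousLinearMap.id ℂ H ∧
  (∀ s t : ℝ, U (s + t) = (U s).comp (U t)) ∧
  (∀ (t : ℝ) (x : H), ‖U t x‖ = ‖x‖) ∧
  ∀ x : H, Continuous fun t : ℝ => U t x

/-- `B` is a nonzero orthogonal projection on `H`, abstracting multiplication by `χ_ω`. -/
def IsOrthProj (B : H →L[ℂ] H) : Prop :=
  B ≠ 0 ∧ B.comp B = B ∧ ∀ x y : H, (inner ℂ (B x) y : ℂ) = inner ℂ x (B y)

/-- Membership in `L∞((a,b);H)`. -/
def MemLinfty (u : ℝ → H) (a b : ℝ) : Prop :=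
  AEStronglyMeasurable u (volume : Measure ℝ) ∧
    ∃ c : ℝ, ∀ᵐ t : ℝ ∂volume, t ∈ Ioo a b → ‖u t‖ ≤ c

/-- Membership in `L∞((0,∞);H)`. -/
def MemLinftyInf (u : ℝ → H) : Prop :=
  AEStronglyMeasurable u (volume : Measure ℝ) ∧
    ∃ c : ℝ, ∀ᵐ t : ℝ ∂volume, t ∈ Ioi (0 : ℝ) → ‖u t‖ ≤ c

/-- The `L∞((a,b);H)` norm of `u`. -/
def supNorm (u : ℝ → H) (a b : ℝ) : ℝ :=
  sInf {c : ℝ | 0 ≤ c ∧ ∀ᵐ t : ℝ ∂volume, t ∈ Ioo a b → ‖u t‖ ≤ c}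

/-- `stateT U B T τ u y₀ = y(T; χ_{(τ,T)}u, y₀)`, the mild solution at time `T` of the
controlled Schrödinger equation with initial state `y₀`, the control acting on `(τ,T)`:
`y(T) = U(T)y₀ + ∫_τ^T U(T-s) B u(s) ds`.  The free state at time `t` starting from `y₀`
with control `u` active from time `0` is `stateT U B t 0 u y₀`. -/
def stateT (U : ℝ → H →L[ℂ] H) (B : H →L[ℂ] H) (T τ : ℝ) (u : ℝ → H) (y₀ : H) : H :=
  U T y₀ + ∫ s in Ioo τ T, U (T - s) (B (u s))

/-- Hypothesis (EC): `L∞`-exact controllability with cost. -/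
def EC (U : ℝ → H →L[ℂ] H) (B : H →L[ℂ] H) : Prop :=
  ∀ τ : ℝ, 0 < τ → ∃ C : ℝ, 0 < C ∧ ∀ y₀ z : H, ∃ u : ℝ → H,
    AEStronglyMeasurable u (volume : Measure ℝ) ∧
    (∀ᵐ t : ℝ ∂volume, t ∈ Ioo 0 τ → ‖u t‖ ≤ C * ‖z - U τ y₀‖) ∧
    stateT U B τ 0 u y₀ = z

/-- Hypothesis (UC): unique continuation. -/
def UC (U : ℝ → H →L[ℂ] H) (B : H →L[ℂ] H) : Prop :=
  ∀ η : H, η ≠ 0 → volume {t : ℝ | B (U t η) = 0} = 0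

/-- The admissible set `U_M` of the minimal time problem `(TOCP)_M`. -/
def UMset (U : ℝ → H →L[ℂ] H) (B : H →L[ℂ] H) (y₀ : H) (M : ℝ) : Set (ℝ → H) :=
  {u | MemLinftyInf u ∧ (∀ᵐ t : ℝ ∂volume, t ∈ Ioi (0 : ℝ) → ‖u t‖ ≤ M) ∧
    ∃ s : ℝ, 0 < s ∧ stateT U B s 0 u y₀ = 0}

/-- The minimal time `T_M` of `(TOCP)_M`. -/
def Tmin (U : ℝ → H →L[ℂ] H) (B : H →L[ℂ] H) (y₀ : H) (M : ℝ) : ℝ :=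
  sInf {s : ℝ | 0 < s ∧ ∃ u ∈ UMset U B y₀ M, stateT U B s 0 u y₀ = 0}

/-- The admissible set `V_T` of the minimal norm problem `(NOCP)_T`. -/
def VTset (U : ℝ → H →L[ℂ] H) (B : H →L[ℂ] H) (y₀ : H) (T : ℝ) : Set (ℝ → H) :=
  {v | MemLinfty v 0 T ∧ stateT U B T 0 v y₀ = 0}

/-- The minimal norm `M_T` of `(NOCP)_T`. -/
def Mmin (U : ℝ → H →L[ℂ] H) (B : H →L[ℂ] H) (y₀ : H) (T : ℝ) : ℝ :=
  sInf ((fun v : ℝ → H => supNorm v 0 T) '' VTset U B y₀ T)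

/-- Hypothesis (BB): bang-bang property of the minimal time problems. -/
def BB (U : ℝ → H →L[ℂ] H) (B : H →L[ℂ] H) : Prop :=
  ∀ y₀ : H, y₀ ≠ 0 → ∀ M : ℝ, 0 < M → ∀ u ∈ UMset U B y₀ M,
    stateT U B (Tmin U B y₀ M) 0 u y₀ = 0 →
    ∀ᵐ t : ℝ ∂volume, t ∈ Ioo 0 (Tmin U B y₀ M) → ‖u t‖ = M

/-- Hypothesis (ET): existence of optimal controls for the minimal time problems. -/
def ET (U : ℝ → H →L[ℂ] H) (B : H →L[ℂ] H) : Prop :=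
  ∀ y₀ : H, y₀ ≠ 0 → ∀ M : ℝ, 0 < M →
    ∃ u ∈ UMset U B y₀ M, stateT U B (Tmin U B y₀ M) 0 u y₀ = 0

/-- The admissible set `U_{M,τ}`. -/
def UadmSet (M τ T : ℝ) : Set (ℝ → H) :=
  {u | MemLinfty u 0 T ∧ ∀ᵐ t : ℝ ∂volume, t ∈ Ioo τ T → ‖u t‖ ≤ M}

/-- The optimal distance `r(M,τ)` of the optimal target problem `(OP)^{M,τ}`. -/
def rOP (U : ℝ → H →L[ℂ] H) (B : H →L[ℂ] H) (y₀ z_d : H) (T M τ : ℝ) : ℝ :=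
  sInf ((fun u : ℝ → H => ‖stateT U B T τ u y₀ - z_d‖) '' UadmSet M τ T)

/-- `u` is an optimal control to `(OP)^{M,τ}`. -/
def IsOptOP (U : ℝ → H →L[ℂ] H) (B : H →L[ℂ] H) (y₀ z_d : H) (T M τ : ℝ) (u : ℝ → H) :
    Prop :=
  u ∈ UadmSet M τ T ∧ ‖stateT U B T τ u y₀ - z_d‖ = rOP U B y₀ z_d T M τ

/-- `M^τ`, the minimal norm for exact steering to the target `z_d`. -/
def Mtau (U : ℝ → H →L[ℂ] H) (B : H →L[ℂ] H) (y₀ z_d : H) (T τ : ℝ) : ℝ :=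
  sInf ((fun u : ℝ → H => supNorm u τ T) ''
    {u : ℝ → H | MemLinfty u 0 T ∧ stateT U B T τ u y₀ = z_d})

/-- The admissible set `W_{τ,r}` of the optimal norm problem `(NP)^{τ,r}`. -/
def WadmSet (U : ℝ → H →L[ℂ] H) (B : H →L[ℂ] H) (y₀ z_d : H) (T τ r : ℝ) :
    Set (ℝ → H) :=
  {u | MemLinfty u 0 T ∧ ‖stateT U B T τ u y₀ - z_d‖ ≤ r}

/-- The optimal norm `M(τ,r)` of `(NP)^{τ,r}`. -/
def MNP (U : ℝ → H →L[ℂ] H) (B : H →L[ℂ] H) (y₀ z_d : H) (T τ r : ℝ) : ℝ :=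
  sInf ((fun u : ℝ → H => supNorm u τ T) '' WadmSet U B y₀ z_d T τ r)

/-- `u` is an optimal control to `(NP)^{τ,r}`. -/
def IsOptNP (U : ℝ → H →L[ℂ] H) (B : H →L[ℂ] H) (y₀ z_d : H) (T τ r : ℝ) (u : ℝ → H) :
    Prop :=
  u ∈ WadmSet U B y₀ z_d T τ r ∧ supNorm u τ T = MNP U B y₀ z_d T τ r

/-- The admissible set `V_{M,r}` of the second type optimal time problem `(TP)^{M,r}`. -/
def VadmSet (U : ℝ → H →L[ℂ] H) (B : H →L[ℂ] H) (y₀ z_d : H) (T M r : ℝ) :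
    Set (ℝ → H) :=
  {u | ∃ τ : ℝ, τ ∈ Ico (0 : ℝ) T ∧ u ∈ UadmSet M τ T ∧
    ‖stateT U B T τ u y₀ - z_d‖ ≤ r}

/-- `τ_{M,r}(u)`. -/
def tauOf (U : ℝ → H →L[ℂ] H) (B : H →L[ℂ] H) (y₀ z_d : H) (T r : ℝ) (u : ℝ → H) : ℝ :=
  sSup {τ : ℝ | τ ∈ Ico (0 : ℝ) T ∧ ‖stateT U B T τ u y₀ - z_d‖ ≤ r}

/-- The optimal time `τ(M,r)` of `(TP)^{M,r}`. -/
def tauTP (U : ℝ → H →L[ℂ] H) (B : H →L[ℂ] H) (y₀ z_d : H) (T M r : ℝ) : ℝ :=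
  sSup (tauOf U B y₀ z_d T r '' VadmSet U B y₀ z_d T M r)

/-- `u` is an optimal control to `(TP)^{M,r}`. -/
def IsOptTP (U : ℝ → H →L[ℂ] H) (B : H →L[ℂ] H) (y₀ z_d : H) (T M r : ℝ) (u : ℝ → H) :
    Prop :=
  u ∈ VadmSet U B y₀ z_d T M r ∧
    ‖stateT U B T (tauTP U B y₀ z_d T M r) u y₀ - z_d‖ ≤ r

/-- The adjoint state `φ*(t) = U(t-T)(z_d - y(T; χ_{(τ,T)}u, y₀))`. -/
def adjState (U : ℝ → H →L[ℂ] H) (B : H →L[ℂ] H) (y₀ z_d : H) (T τ : ℝ) (u : ℝ → H)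
    (t : ℝ) : H :=
  U (t - T) (z_d - stateT U B T τ u y₀)

set_option linter.unusedSectionVars false

section AuxLemmas

theorem aux_normB_le {B : H →L[ℂ] H} (hB : IsOrthProj B) (x : H) : ‖B x‖ ≤ ‖x‖ := by
  obtain ⟨-, hBB, hsa⟩ := hB
  have hB2 : B (B x) = B x := DFunLike.congr_fun hBB x
  have h1 : (inner ℂ (B x) (B x) : ℂ) = inner ℂ x (B x) := by rw [hsa x (B x), hB2]
  have h2 : (inner ℂ (B x) (B x) : ℂ) = (‖B x‖ : ℂ)^2 := inner_self_eq_norm_sq_to_K _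
  have h3 : ‖B x‖^2 ≤ ‖x‖ * ‖B x‖ := by
    calc ‖B x‖^2 = ‖(inner ℂ (B x) (B x) : ℂ)‖ := by
          rw [h2, norm_pow, Complex.norm_real, norm_norm]
    _ = ‖(inner ℂ x (B x) : ℂ)‖ := by rw [h1]
    _ ≤ ‖x‖ * ‖B x‖ := norm_inner_le_norm _ _
  nlinarith [norm_nonneg (B x), norm_nonneg x]

theorem aux_jointCont {U : ℝ → H →L[ℂ] H} (hiso : ∀ (t : ℝ) (x : H), ‖U t x‖ = ‖x‖)
    (hc : ∀ x : H, Continuous fun t : ℝ => U t x) :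
    Continuous fun p : ℝ × H => U p.1 p.2 := by
  rw [Metric.continuous_iff]
  rintro ⟨t₀, x₀⟩ ε hε
  obtain ⟨δ₁, hδ₁, h1⟩ := Metric.continuous_iff.1 (hc x₀) t₀ (ε/2) (half_pos hε)
  refine ⟨min δ₁ (ε/2), by positivity, ?_⟩
  rintro ⟨t, x⟩ hd
  have h1t : dist t t₀ < min δ₁ (ε/2) :=
    lt_of_le_of_lt (by rw [Prod.dist_eq]; exact le_max_left _ _) hd
  have h1x : dist x x₀ < min δ₁ (ε/2) :=
    lt_of_le_of_lt (by rw [Prod.dist_eq]; exact le_max_right _ _) hd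
  calc dist (U t x) (U t₀ x₀)
      ≤ dist (U t x) (U t x₀) + dist (U t x₀) (U t₀ x₀) := dist_triangle _ _ _
    _ < ε/2 + ε/2 := by
        apply add_lt_add_of_le_of_lt
        · rw [dist_eq_norm, ← map_sub, hiso, ← dist_eq_norm]
          exact (h1x.trans_le (min_le_right _ _)).le
        · exact h1 t (h1t.trans_le (min_le_left _ _))
    _ = ε := add_halves ε

theorem aux_aesm {U : ℝ → H →L[ℂ] H} (hU : IsUnitaryGroup U) (B : H →L[ℂ] H) {u : ℝ → H}
    (hu : AEStronglyMeasurable u (volume : Measure ℝ)) (T : ℝ) :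
    AEStronglyMeasurable (fun s : ℝ => U (T - s) (B (u s))) (volume : Measure ℝ) := by
  obtain ⟨-, -, hiso, hc⟩ := hU
  obtain ⟨u', hu', heq⟩ := hu
  refine ⟨fun s => U (T - s) (B (u' s)), ?_, ?_⟩
  · have hF : Continuous fun p : ℝ × H => U p.1 (B p.2) :=
      (aux_jointCont hiso hc).comp (continuous_fst.prodMk (B.continuous.comp continuous_snd))
    exact hF.comp_stronglyMeasurable
      (((continuous_const.sub continuous_id).stronglyMeasurable).prodMk hu')
  · filter_upwards [heq] with s hs; rw [hs]

theorem aux_intOn {U : ℝ → H →L[ℂ] H} (hU : IsUnitaryGroup U) (B : H →L[ℂ] H)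
    (hBn : ∀ x : H, ‖B x‖ ≤ ‖x‖) {u : ℝ → H} {τ T c : ℝ}
    (hu : AEStronglyMeasurable u (volume : Measure ℝ))
    (hb : ∀ᵐ t ∂(volume : Measure ℝ), t ∈ Ioo τ T → ‖u t‖ ≤ c) :
    IntegrableOn (fun s => U (T - s) (B (u s))) (Ioo τ T) volume := by
  apply Measure.integrableOn_of_bounded (M := c)
  · simp [Real.volume_Ioo]
  · exact aux_aesm hU B hu T
  · rw [ae_restrict_iff' measurableSet_Ioo]
    filter_upwards [hb] with t ht hmem
    rw [hU.2.2.1]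
    exact (hBn _).trans (ht hmem)

theorem aux_norm_int_le {U : ℝ → H →L[ℂ] H} (hU : IsUnitaryGroup U) (B : H →L[ℂ] H)
    (hBn : ∀ x : H, ‖B x‖ ≤ ‖x‖) {u : ℝ → H} {τ T c : ℝ} (hτT : τ ≤ T)
    (hu : AEStronglyMeasurable u (volume : Measure ℝ))
    (hb : ∀ᵐ t ∂(volume : Measure ℝ), t ∈ Ioo τ T → ‖u t‖ ≤ c) :
    ‖∫ s in Ioo τ T, U (T - s) (B (u s))‖ ≤ c * (T - τ) := by
  have h := norm_setIntegral_le_of_norm_le_const_ae' (μ := volume) (s := Ioo τ T)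
    (f := fun s => U (T - s) (B (u s))) (C := c)
    (by simp [Real.volume_Ioo])
    (by filter_upwards [hb] with t ht hmem
        rw [hU.2.2.1]; exact (hBn _).trans (ht hmem))
  rwa [Measure.real_def, Real.volume_Ioo, ENNReal.toReal_ofReal (sub_nonneg.2 hτT)] at h

theorem supNorm_nonneg (u : ℝ → H) (a b : ℝ) : 0 ≤ supNorm u a b :=
  Real.sInf_nonneg fun _ hx => hx.1

theorem supNorm_le {u : ℝ → H} {a b c : ℝ} (hc : 0 ≤ c)
    (hb : ∀ᵐ t : ℝ ∂volume, t ∈ Ioo a b → ‖u t‖ ≤ c) : supNorm u a b ≤ c :=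
  csInf_le ⟨0, fun _ hx => hx.1⟩ ⟨hc, hb⟩

end AuxLemmas
theorem parameter_sets_equal
    (U : ℝ → H →L[ℂ] H) (B : H →L[ℂ] H) (hU : IsUnitaryGroup U) (hB : IsOrthProj B)
    (hEC : EC U B) (hECrev : EC (fun t => U (-t)) B)
    (hUC : UC U B)
    (T : ℝ) (hT : 0 < T) (y₀ z_d : H) (hrT : 0 < ‖U T y₀ - z_d‖) :
    {p : ℝ × ℝ | 0 < p.1 ∧
        p.2 ∈ Ico (rOP U B y₀ z_d T p.1 0) ‖U T y₀ - z_d‖ ∩ Ioo (0 : ℝ) ‖U T y₀ - z_d‖} =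
      {p : ℝ × ℝ | p.2 ∈ Ioo (0 : ℝ) ‖U T y₀ - z_d‖ ∧ MNP U B y₀ z_d T 0 p.2 ≤ p.1} := by
  have hBn : ∀ x : H, ‖B x‖ ≤ ‖x‖ := aux_normB_le hB
  obtain ⟨C, hC, hECT⟩ := hEC T hT
  -- the `S`-set of `supNorm u 0 T` is nonempty for every `MemLinfty` function
  have hSne : ∀ u : ℝ → H, MemLinfty u 0 T →
      {c : ℝ | 0 ≤ c ∧ ∀ᵐ t : ℝ ∂volume, t ∈ Ioo 0 T → ‖u t‖ ≤ c}.Nonempty := by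
    rintro u ⟨-, c₀, hc₀⟩
    exact ⟨max c₀ 0, le_max_right _ _, hc₀.mono fun t h ht => (h ht).trans (le_max_left _ _)⟩
  ext ⟨M, r⟩
  simp only [mem_setOf_eq, mem_inter_iff, mem_Ico, mem_Ioo]
  constructor
  · -- LHS ⊆ RHS
    rintro ⟨hM, ⟨hr1, hr2⟩, hr0, -⟩
    refine ⟨⟨hr0, hr2⟩, ?_⟩
    apply le_of_forall_pos_le_add
    intro δ hδ
    have hδ₀ : 0 < δ / C := div_pos hδ hC
    have hzero_mem : (0 : ℝ → H) ∈ UadmSet (H := H) M 0 T := by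
      refine ⟨⟨aestronglyMeasurable_const, 0, ?_⟩, ?_⟩ <;>
        · filter_upwards with t ht
          simp only [Pi.zero_apply, norm_zero]
          first | exact le_refl 0 | exact hM.le
    have hne : ((fun u : ℝ → H => ‖stateT U B T 0 u y₀ - z_d‖) '' UadmSet M 0 T).Nonempty :=
      ⟨_, ⟨0, hzero_mem, rfl⟩⟩
    have hlt : sInf ((fun u : ℝ → H => ‖stateT U B T 0 u y₀ - z_d‖) '' UadmSet M 0 T)
        < rOP U B y₀ z_d T M 0 + δ / C := lt_add_of_pos_right _ hδ₀
    obtain ⟨x, ⟨u, hu_mem, rfl⟩, hx⟩ := exists_lt_of_csInf_lt hne hlt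
    obtain ⟨hu_lin, hu_bd⟩ := hu_mem
    set d := ‖stateT U B T 0 u y₀ - z_d‖ with hd
    have hdr : d < r + δ / C := hx.trans_le (add_le_add_left hr1 _)
    have hMNPbdd : BddBelow ((fun u : ℝ → H => supNorm u 0 T) '' WadmSet U B y₀ z_d T 0 r) :=
      ⟨0, by rintro x ⟨w, -, rfl⟩; exact supNorm_nonneg _ _ _⟩
    by_cases hcase : d ≤ r
    · have h1 : MNP U B y₀ z_d T 0 r ≤ supNorm u 0 T :=
        csInf_le hMNPbdd ⟨u, ⟨hu_lin, hcase⟩, rfl⟩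
      have h2 : supNorm u 0 T ≤ M := supNorm_le hM.le hu_bd
      linarith
    · push_neg at hcase
      have hd0 : 0 < d := hr0.trans hcase
      have hlam0 : 0 ≤ (d - r) / d := div_nonneg (by linarith) hd0.le
      obtain ⟨v, hvm, hvb, hvz⟩ :=
        hECT 0 ((((d - r) / d : ℝ) : ℂ) • (z_d - stateT U B T 0 u y₀))
      have hUT0 : U T (0 : H) = 0 := map_zero _
      have hIv : (∫ s in Ioo (0:ℝ) T, U (T - s) (B (v s)))
          = (((d - r) / d : ℝ) : ℂ) • (z_d - stateT U B T 0 u y₀) := by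
        have h := hvz
        rw [stateT, hUT0, zero_add] at h
        exact h
      have hwnorm : ‖z_d - stateT U B T 0 u y₀‖ = d := by rw [norm_sub_rev]
      have hvb' : ∀ᵐ t : ℝ ∂volume, t ∈ Ioo (0:ℝ) T → ‖v t‖ ≤ C * (d - r) := by
        filter_upwards [hvb] with t ht hmem
        have h := ht hmem
        rw [hUT0, sub_zero, norm_smul, Complex.norm_real,
          Real.norm_of_nonneg hlam0, hwnorm] at h
        calc ‖v t‖ ≤ C * ((d - r) / d * d) := h
          _ = C * (d - r) := by rw [div_mul_cancel₀ _ hd0.ne']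
      have hiu : IntegrableOn (fun s => U (T - s) (B (u s))) (Ioo 0 T) volume :=
        aux_intOn hU B hBn hu_lin.1 hu_bd
      have hiv : IntegrableOn (fun s => U (T - s) (B (v s))) (Ioo 0 T) volume :=
        aux_intOn hU B hBn hvm hvb'
      have hsum : stateT U B T 0 (u + v) y₀
          = stateT U B T 0 u y₀ + (((d - r) / d : ℝ) : ℂ) • (z_d - stateT U B T 0 u y₀) := by
        rw [show stateT U B T 0 (u + v) y₀ = U T y₀ + ∫ s in Ioo (0:ℝ) T,
            (U (T - s) (B (u s)) + U (T - s) (B (v s))) from by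
          rw [stateT]; congr 1; apply setIntegral_congr_fun measurableSet_Ioo
          intro s _; simp only [Pi.add_apply, map_add]]
        rw [integral_add hiu hiv, hIv, stateT]
        abel
      have hnorm_sum : ‖stateT U B T 0 (u + v) y₀ - z_d‖ = r := by
        have h1 : stateT U B T 0 (u + v) y₀ - z_d
            = ((1 - (d - r) / d : ℝ) : ℂ) • (stateT U B T 0 u y₀ - z_d) := by
          rw [hsum]
          push_cast
          module
        rw [h1, norm_smul, Complex.norm_real,
          Real.norm_of_nonneg (by rw [sub_nonneg]; exact div_le_one_of_le₀ (by linarith) hd0.le),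
          ← hd]
        field_simp
        ring
      have hbsum : ∀ᵐ t : ℝ ∂volume, t ∈ Ioo (0:ℝ) T → ‖(u + v) t‖ ≤ M + C * (d - r) := by
        filter_upwards [hu_bd, hvb'] with t h1 h2 hmem
        calc ‖(u + v) t‖ ≤ ‖u t‖ + ‖v t‖ := norm_add_le _ _
          _ ≤ M + C * (d - r) := add_le_add (h1 hmem) (h2 hmem)
      have hCd : 0 ≤ C * (d - r) := mul_nonneg hC.le (by linarith)
      have hWmem : u + v ∈ WadmSet U B y₀ z_d T 0 r :=
        ⟨⟨hu_lin.1.add hvm, ⟨M + C * (d - r), hbsum⟩⟩, le_of_eq hnorm_sum⟩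
      have hsup : supNorm (u + v) 0 T ≤ M + C * (d - r) :=
        supNorm_le (by linarith [hM.le]) hbsum
      have h1 : MNP U B y₀ z_d T 0 r ≤ supNorm (u + v) 0 T :=
        csInf_le hMNPbdd ⟨u + v, hWmem, rfl⟩
      have h2 : C * (d - r) ≤ δ := by
        have : C * (d - r) ≤ C * (δ / C) :=
          mul_le_mul_of_nonneg_left (by linarith) hC.le
        rwa [mul_div_cancel₀ _ hC.ne'] at this
      linarith
  · -- RHS ⊆ LHS
    rintro ⟨⟨hr0, hr2⟩, hMNP⟩
    obtain ⟨w₀, hw₀m, hw₀b, hw₀z⟩ := hECT y₀ z_d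
    have hw₀W : w₀ ∈ WadmSet U B y₀ z_d T 0 r :=
      ⟨⟨hw₀m, ⟨C * ‖z_d - U T y₀‖, hw₀b⟩⟩, by rw [hw₀z]; simpa using hr0.le⟩
    have hWne : ((fun u : ℝ → H => supNorm u 0 T) '' WadmSet U B y₀ z_d T 0 r).Nonempty :=
      ⟨_, w₀, hw₀W, rfl⟩
    have hlow : (‖U T y₀ - z_d‖ - r) / T ≤ MNP U B y₀ z_d T 0 r := by
      apply le_csInf hWne
      rintro x ⟨u, ⟨hul, hur⟩, rfl⟩
      refine le_csInf (hSne u hul) ?_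
      rintro c ⟨hc0, hcb⟩
      rw [div_le_iff₀ hT]
      have hI : ‖∫ s in Ioo (0:ℝ) T, U (T - s) (B (u s))‖ ≤ c * (T - 0) :=
        aux_norm_int_le hU B hBn hT.le hul.1 hcb
      have hsplit : U T y₀ - z_d
          = (stateT U B T 0 u y₀ - z_d) - ∫ s in Ioo (0:ℝ) T, U (T - s) (B (u s)) := by
        rw [stateT]; abel
      have : ‖U T y₀ - z_d‖ ≤ ‖stateT U B T 0 u y₀ - z_d‖
          + ‖∫ s in Ioo (0:ℝ) T, U (T - s) (B (u s))‖ := by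
        rw [hsplit]; exact norm_sub_le _ _
      have hTT : c * (T - 0) = c * T := by ring
      rw [hTT] at hI
      linarith
    have hMpos : 0 < M :=
      lt_of_lt_of_le (div_pos (by linarith) hT) (hlow.trans hMNP)
    refine ⟨hMpos, ⟨?_, hr2⟩, hr0, hr2⟩
    apply le_of_forall_pos_le_add
    intro ε' hε'
    have hε : 0 < ε' / T := div_pos hε' hT
    have h1 : MNP U B y₀ z_d T 0 r < M + ε' / T :=
      lt_of_le_of_lt hMNP (lt_add_of_pos_right _ hε)
    obtain ⟨x, ⟨u, ⟨hul, hur⟩, rfl⟩, hx⟩ := exists_lt_of_csInf_lt hWne h1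
    obtain ⟨c', ⟨hc'0, hc'b⟩, hc'lt⟩ := exists_lt_of_csInf_lt (hSne u hul) hx
    have hub : ∀ᵐ t : ℝ ∂volume, t ∈ Ioo (0:ℝ) T → ‖u t‖ ≤ M + ε' / T :=
      hc'b.mono fun t h ht => (h ht).trans hc'lt.le
    have hMε : 0 < M + ε' / T := by positivity
    have hk0 : 0 ≤ M / (M + ε' / T) := div_nonneg hMpos.le hMε.le
    have hk1 : M / (M + ε' / T) ≤ 1 := div_le_one_of_le₀ (by linarith) hMε.le
    set k : ℝ := M / (M + ε' / T) with hkdef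
    have hvm : AEStronglyMeasurable (fun t => (k : ℂ) • u t) (volume : Measure ℝ) :=
      hul.1.const_smul _
    have hvb : ∀ᵐ t : ℝ ∂volume, t ∈ Ioo (0:ℝ) T → ‖(k : ℂ) • u t‖ ≤ M := by
      filter_upwards [hub] with t ht hmem
      rw [norm_smul, Complex.norm_real, Real.norm_of_nonneg hk0]
      calc k * ‖u t‖ ≤ k * (M + ε' / T) :=
            mul_le_mul_of_nonneg_left (ht hmem) hk0
        _ = M := div_mul_cancel₀ _ hMε.ne'
    have hvU : (fun t => (k : ℂ) • u t) ∈ UadmSet (H := H) M 0 T := ⟨⟨hvm, M, hvb⟩, hvb⟩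
    have hIu : ‖∫ s in Ioo (0:ℝ) T, U (T - s) (B (u s))‖ ≤ (M + ε' / T) * (T - 0) :=
      aux_norm_int_le hU B hBn hT.le hul.1 hub
    have hsv : stateT U B T 0 (fun t => (k : ℂ) • u t) y₀
        = U T y₀ + (k : ℂ) • ∫ s in Ioo (0:ℝ) T, U (T - s) (B (u s)) := by
      rw [stateT]
      congr 1
      rw [← integral_smul]
      apply setIntegral_congr_fun measurableSet_Ioo
      intro s _
      simp only [_root_.map_smul]
    have hdiff : stateT U B T 0 (fun t => (k : ℂ) • u t) y₀ - z_d
        = (stateT U B T 0 u y₀ - z_d)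
          + (((k - 1 : ℝ)) : ℂ) • ∫ s in Ioo (0:ℝ) T, U (T - s) (B (u s)) := by
      rw [hsv, stateT]
      push_cast
      module
    have hnorm : ‖stateT U B T 0 (fun t => (k : ℂ) • u t) y₀ - z_d‖ ≤ r + ε' := by
      rw [hdiff]
      calc ‖(stateT U B T 0 u y₀ - z_d)
            + (((k - 1 : ℝ)) : ℂ) • ∫ s in Ioo (0:ℝ) T, U (T - s) (B (u s))‖
          ≤ ‖stateT U B T 0 u y₀ - z_d‖
            + ‖(((k - 1 : ℝ)) : ℂ)‖ * ‖∫ s in Ioo (0:ℝ) T, U (T - s) (B (u s))‖ := by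
            rw [← norm_smul]; exact norm_add_le _ _
        _ ≤ r + (1 - k) * ((M + ε' / T) * (T - 0)) := by
            have hnk : ‖(((k - 1 : ℝ)) : ℂ)‖ = 1 - k := by
              rw [Complex.norm_real, Real.norm_of_nonpos (by linarith), neg_sub]
            rw [hnk]
            exact add_le_add hur
              (mul_le_mul_of_nonneg_left hIu (by linarith))
        _ = r + ε' := by
            have hone : (1 - k) * (M + ε' / T) = ε' / T := by
              rw [hkdef]
              field_simp
              ring
            rw [show (1 - k) * ((M + ε' / T) * (T - 0)) = ((1 - k) * (M + ε' / T)) * T by ring,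
              hone, div_mul_cancel₀ _ hT.ne']
    have hbdd : BddBelow ((fun u : ℝ → H => ‖stateT U B T 0 u y₀ - z_d‖) '' UadmSet M 0 T) :=
      ⟨0, by rintro x ⟨w, -, rfl⟩; exact norm_nonneg _⟩
    have : rOP U B y₀ z_d T M 0 ≤ ‖stateT U B T 0 (fun t => (k : ℂ) • u t) y₀ - z_d‖ :=
      csInf_le hbdd ⟨_, hvU, rfl⟩
    linarith
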